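/- Let G be a finite simple connected graph on n ≥ 2 vertices with maximum vertex degree Δ(G). Then λ(G) ≥ Δ(G) + 1, with equality if and only if Δ(G) = n - 1. -/

import Mathlib

open Matrix

private lemma sg_boundary_edge {V : Type*} {G : SimpleGraph V} (S : Set V)
    {a b : V} (p : G.Walk a b) (ha : a ∈ S) (hb : b ∉ S) :
    ∃ u w, G.Adj u w ∧ u ∈ S ∧ w ∉ S := by
  induction p with
  | nil => exact absurd ha hb
  | @cons a c b h p ih =>
    by_cases hc : c ∈ S
    · exact ih hc hb
    · exact ⟨a, c, h, ha, hc⟩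

private lemma sg_rayleigh_le {V : Type*} [Fintype V] [DecidableEq V]
    {L : Matrix V V ℝ} (hL : L.IsHermitian) {lam : ℝ}
    (hub : ∀ s ∈ spectrum ℝ L, s ≤ lam) (x : V → ℝ) :
    x ⬝ᵥ (L *ᵥ x) ≤ lam * (x ⬝ᵥ x) := by
  have hM : (lam • (1 : Matrix V V ℝ) - L).IsHermitian := by
    unfold Matrix.IsHermitian
    rw [conjTranspose_sub, conjTranspose_smul, conjTranspose_one, hL, star_trivial]
  have hpsd : (lam • (1 : Matrix V V ℝ) - L).PosSemidef := by
    refine hM.posSemidef_iff_eigenvalues_nonneg.mpr fun i => ?_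
    show 0 ≤ hM.eigenvalues i
    obtain ⟨μ, hμ⟩ : ∃ μ : ℝ, μ = hM.eigenvalues i := ⟨_, rfl⟩
    have hmem : μ ∈ spectrum ℝ (lam • (1 : Matrix V V ℝ) - L) :=
      hμ ▸ hM.eigenvalues_mem_spectrum_real i
    have heq : lam • (1 : Matrix V V ℝ) - L = algebraMap ℝ (Matrix V V ℝ) lam - L := by
      rw [Algebra.algebraMap_eq_smul_one]
    rw [heq, ← spectrum.singleton_sub_eq] at hmem
    rw [← hμ]
    obtain ⟨a, ha, s, hs, hM2⟩ := Set.mem_sub.mp hmem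
    have ha' : a = lam := by simpa using ha
    have := hub s hs
    subst ha'
    linarith [hM2 ▸ sub_nonneg.mpr this]
  have h2 := hpsd.dotProduct_mulVec_nonneg x
  rw [star_trivial, sub_mulVec, dotProduct_sub, smul_mulVec, one_mulVec,
    dotProduct_smul, smul_eq_mul] at h2
  linarith

private lemma sg_exists_eigenvector {V : Type*} [Fintype V] [DecidableEq V]
    {L : Matrix V V ℝ} {lam : ℝ} (h : lam ∈ spectrum ℝ L) :
    ∃ x : V → ℝ, x ≠ 0 ∧ L *ᵥ x = lam • x := by
  rw [spectrum.mem_iff, Matrix.isUnit_iff_isUnit_det, isUnit_iff_ne_zero, not_not] at h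
  obtain ⟨x, hx0, hx⟩ := Matrix.exists_mulVec_eq_zero_iff.mpr h
  refine ⟨x, hx0, ?_⟩
  rw [sub_mulVec, sub_eq_zero] at hx
  rw [← hx, Algebra.algebraMap_eq_smul_one, smul_mulVec, one_mulVec]

private lemma sg_quadform_eq {V : Type*} [Fintype V] [DecidableEq V]
    (G : SimpleGraph V) [DecidableRel G.Adj] (x : V → ℝ) :
    x ⬝ᵥ (G.lapMatrix ℝ *ᵥ x)
      = (∑ i : V, ∑ j : V, if G.Adj i j then (x i - x j) ^ 2 else 0) / 2 := by
  rw [← Matrix.toLinearMap₂'_apply', SimpleGraph.lapMatrix_toLinearMap₂']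

private lemma sg_lap_compl_identity {V : Type*} [Fintype V] [DecidableEq V]
    (G : SimpleGraph V) [DecidableRel G.Adj] :
    (Fintype.card V : ℝ) • (1 : Matrix V V ℝ) - G.lapMatrix ℝ
      = Gᶜ.lapMatrix ℝ + Matrix.of (fun _ _ => (1 : ℝ)) := by
  ext i j
  have : Nonempty V := ⟨i⟩
  have hdeg : (Gᶜ.degree i : ℝ) = (Fintype.card V : ℝ) - 1 - G.degree i := by
    rw [SimpleGraph.degree_compl,
      Nat.cast_sub (Nat.le_sub_one_of_lt (G.degree_lt_card_verts i)),
      Nat.cast_sub Fintype.card_pos, Nat.cast_one]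
  by_cases hij : i = j
  · subst hij
    simp only [Matrix.sub_apply, Matrix.smul_apply, Matrix.one_apply_eq, smul_eq_mul, mul_one,
      SimpleGraph.lapMatrix, SimpleGraph.degMatrix, Matrix.diagonal_apply_eq,
      SimpleGraph.adjMatrix_apply, Matrix.add_apply, Matrix.of_apply,
      if_neg (G.irrefl : ¬G.Adj i i), if_neg (Gᶜ.irrefl : ¬Gᶜ.Adj i i)]
    rw [hdeg]; ring
  · have hc : Gᶜ.Adj i j ↔ ¬G.Adj i j := by
      rw [SimpleGraph.compl_adj]; tauto
    simp only [Matrix.sub_apply, Matrix.smul_apply, Matrix.one_apply_ne hij, smul_eq_mul,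
      mul_zero, SimpleGraph.lapMatrix, SimpleGraph.degMatrix, Matrix.diagonal_apply_ne _ hij,
      SimpleGraph.adjMatrix_apply, Matrix.add_apply, Matrix.of_apply]
    by_cases hadj : G.Adj i j
    · rw [if_pos hadj, if_neg (fun h => (hc.mp h) hadj)]; ring
    · rw [if_neg hadj, if_pos (hc.mpr hadj)]; ring

theorem stmt_6 {V : Type*} [Fintype V] [DecidableEq V]
    (G : SimpleGraph V) [DecidableRel G.Adj]
    (hcard : 2 ≤ Fintype.card V) (hconn : G.Connected)
    (lam : ℝ) (hlam : IsGreatest (spectrum ℝ (G.lapMatrix ℝ)) lam) :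
    lam ≥ G.maxDegree + 1 ∧
      (lam = G.maxDegree + 1 ↔ G.maxDegree = Fintype.card V - 1) := by
  classical
  set n := Fintype.card V with hn
  have hnpos : 0 < n := by omega
  have hne : Nonempty V := Fintype.card_pos_iff.mp hnpos
  obtain ⟨v, hv⟩ := G.exists_maximal_degree_vertex
  set d := G.maxDegree with hd
  -- v has a neighbor
  have hex : ∃ u, G.Adj v u := by
    obtain ⟨u, hu⟩ := Fintype.exists_ne_of_one_lt_card (by omega) v
    obtain ⟨p⟩ := hconn.preconnected v u
    cases p with
    | nil => exact absurd rfl hu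
    | cons h _ => exact ⟨_, h⟩
  have hd1 : 1 ≤ d := by
    rw [hv]
    exact (G.degree_pos_iff_exists_adj v).mpr hex
  have hdn : d < n := G.maxDegree_lt_card_verts
  -- test vector
  set x : V → ℝ := fun i => if i = v then (d : ℝ) else if G.Adj v i then -1 else 0 with hxdef
  have hxv : x v = d := if_pos rfl
  have hxadj : ∀ i, G.Adj v i → x i = -1 := by
    intro i h
    rw [hxdef]
    simp only
    rw [if_neg (fun he => G.irrefl (he ▸ h)), if_pos h]
  have hxx : x ⬝ᵥ x = d * ((d : ℝ) + 1) := by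
    rw [dotProduct, ← Finset.add_sum_erase _ _ (Finset.mem_univ v)]
    have h1 : ∀ i ∈ Finset.univ.erase v, x i * x i = if G.Adj v i then (1 : ℝ) else 0 := by
      intro i hi
      by_cases h : G.Adj v i
      · rw [hxadj i h, if_pos h]; ring
      · rw [hxdef]
        simp only
        rw [if_neg (Finset.ne_of_mem_erase hi), if_neg h, if_neg h, mul_zero]
    rw [Finset.sum_congr rfl h1,
      Finset.sum_erase _ (by rw [if_neg (G.irrefl : ¬G.Adj v v)]),
      ← SimpleGraph.degree_eq_sum_if_adj, hxv, ← hv]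
    ring
  -- quadratic form pieces
  set f : V → V → ℝ := fun i j => if G.Adj i j then (x i - x j) ^ 2 else 0 with hfdef
  have hf_nonneg : ∀ i j, 0 ≤ f i j := by
    intro i j
    rw [hfdef]
    simp only
    split <;> positivity
  have hfsymm : ∀ i j, f i j = f j i := by
    intro i j
    rw [hfdef]
    simp only
    by_cases h : G.Adj i j
    · rw [if_pos h, if_pos h.symm]; ring
    · rw [if_neg h, if_neg (fun h' => h h'.symm)]
  have hfv : ∑ j, f v j = d * ((d : ℝ) + 1) ^ 2 := by
    have h1 : ∀ j, f v j = (if G.Adj v j then (1 : ℝ) else 0) * ((d : ℝ) + 1) ^ 2 := by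
      intro j
      rw [hfdef]
      simp only
      by_cases h : G.Adj v j
      · rw [if_pos h, if_pos h, hxv, hxadj j h]; ring
      · rw [if_neg h, if_neg h, zero_mul]
    simp_rw [h1]
    rw [← Finset.sum_mul, ← SimpleGraph.degree_eq_sum_if_adj, ← hv]
  have hfvv : f v v = 0 := by rw [hfdef]; simp only; rw [if_neg (G.irrefl : ¬G.Adj v v)]
  have hfcol : ∑ i ∈ Finset.univ.erase v, f i v = d * ((d : ℝ) + 1) ^ 2 := by
    rw [Finset.sum_erase_eq_sub (Finset.mem_univ v), hfvv, sub_zero]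
    calc ∑ i, f i v = ∑ i, f v i := by simp_rw [hfsymm]
    _ = d * ((d : ℝ) + 1) ^ 2 := hfv
  have hsplit : ∑ i, ∑ j, f i j
      = (∑ j, f v j) + ∑ i ∈ Finset.univ.erase v, ∑ j, f i j :=
    (Finset.add_sum_erase _ (fun i => ∑ j, f i j) (Finset.mem_univ v)).symm
  have key : 2 * (d * ((d : ℝ) + 1) ^ 2) ≤ ∑ i, ∑ j, f i j := by
    rw [hsplit]
    have h2 : ∑ i ∈ Finset.univ.erase v, f i v ≤ ∑ i ∈ Finset.univ.erase v, ∑ j, f i j :=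
      Finset.sum_le_sum fun i _ =>
        Finset.single_le_sum (fun j _ => hf_nonneg i j) (Finset.mem_univ v)
    rw [hfcol] at h2
    have := hfv
    linarith
  -- Rayleigh upper bound
  have hHerm : (G.lapMatrix ℝ).IsHermitian := (SimpleGraph.posSemidef_lapMatrix ℝ G).1
  have hray := sg_rayleigh_le hHerm (fun s hs => hlam.2 hs) x
  rw [sg_quadform_eq, hxx] at hray
  have hdR : (1 : ℝ) ≤ d := by exact_mod_cast hd1
  have hray' : (∑ i, ∑ j, f i j) / 2 ≤ lam * ((d : ℝ) * ((d : ℝ) + 1)) := hray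
  have hdpos : (0 : ℝ) < (d : ℝ) * ((d : ℝ) + 1) := by nlinarith
  have part1 : (d : ℝ) + 1 ≤ lam := by
    have h5 : ((d : ℝ) + 1) * ((d : ℝ) * ((d : ℝ) + 1)) ≤ lam * ((d : ℝ) * ((d : ℝ) + 1)) := by
      nlinarith [key, hray']
    exact le_of_mul_le_mul_right h5 hdpos
  refine ⟨part1, ?_, ?_⟩
  · -- forward: lam = d + 1 → d = n - 1
    intro hlameq
    by_contra hne'
    have hdlt : d + 1 < n := by omega
    -- find a vertex outside the closed neighborhood
    obtain ⟨w0, hw0⟩ : ∃ w, w ∉ insert v (G.neighborFinset v) := by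
      by_contra hcon
      push_neg at hcon
      have hsub : Finset.univ ⊆ insert v (G.neighborFinset v) := fun a _ => hcon a
      have := Finset.card_le_card hsub
      rw [Finset.card_univ, Finset.card_insert_of_notMem (by simp),
        SimpleGraph.card_neighborFinset_eq_degree, ← hv] at this
      omega
    have hw0' : ¬(w0 = v ∨ G.Adj v w0) := by
      simp only [Finset.mem_insert, SimpleGraph.mem_neighborFinset] at hw0
      tauto
    obtain ⟨p⟩ := hconn.preconnected v w0
    obtain ⟨u, w, huw, hu, hw⟩ :=
      sg_boundary_edge {i | i = v ∨ G.Adj v i} p (Or.inl rfl) hw0'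
    have huv : u ≠ v := by
      rintro rfl
      exact hw (Or.inr huw)
    have hadjvu : G.Adj v u := (hu.resolve_left huv)
    have hwv : w ≠ v := fun h => hw (Or.inl h)
    have hxw : x w = 0 := by
      rw [hxdef]
      simp only
      rw [if_neg hwv, if_neg (fun h => hw (Or.inr h))]
    have hfuw : f u w = 1 := by
      rw [hfdef]
      simp only
      rw [if_pos huw, hxadj u hadjvu, hxw]
      ring
    -- strict lower bound
    have hvw : v ≠ w := fun h => hwv h.symm
    have key' : 2 * (d * ((d : ℝ) + 1) ^ 2) + 1 ≤ ∑ i, ∑ j, f i j := by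
      rw [hsplit]
      have hu' : u ∈ Finset.univ.erase v := Finset.mem_erase.mpr ⟨huv, Finset.mem_univ u⟩
      have h2 : ∑ i ∈ Finset.univ.erase v, (f i v + if i = u then f u w else 0)
          ≤ ∑ i ∈ Finset.univ.erase v, ∑ j, f i j := by
        apply Finset.sum_le_sum
        intro i _
        by_cases h : i = u
        · subst h
          rw [if_pos rfl]
          have hsub : ({v, w} : Finset V).sum (f i) ≤ ∑ j, f i j :=
            Finset.sum_le_sum_of_subset_of_nonneg (Finset.subset_univ _)
              (fun j _ _ => hf_nonneg i j)
          rwa [Finset.sum_pair hvw] at hsub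
        · rw [if_neg h, add_zero]
          exact Finset.single_le_sum (fun j _ => hf_nonneg i j) (Finset.mem_univ v)
      rw [Finset.sum_add_distrib, Finset.sum_ite_eq' _ u _, if_pos hu', hfcol, hfuw] at h2
      linarith [hfv]
    have hray2 : (∑ i, ∑ j, f i j) / 2 ≤ lam * ((d : ℝ) * ((d : ℝ) + 1)) := hray
    rw [hlameq] at hray2
    nlinarith [key', hray2]
  · -- backward: d = n - 1 → lam = d + 1
    intro hdn'
    have hcast : (d : ℝ) + 1 = n := by
      have : d + 1 = n := by omega
      exact_mod_cast congrArg (Nat.cast : ℕ → ℝ) this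
    -- upper bound lam ≤ n
    obtain ⟨x0, hx00, hx0eig⟩ := sg_exists_eigenvector hlam.1
    have hx0pos : 0 < x0 ⬝ᵥ x0 := by
      have hnn : 0 ≤ x0 ⬝ᵥ x0 := Finset.sum_nonneg fun i _ => mul_self_nonneg _
      rcases lt_or_eq_of_le hnn with h | h
      · exact h
      · exact absurd (dotProduct_self_eq_zero.mp h.symm) hx00
    have hident := sg_lap_compl_identity G
    have hcomplpsd := (SimpleGraph.posSemidef_lapMatrix ℝ Gᶜ).dotProduct_mulVec_nonneg x0
    rw [star_trivial] at hcomplpsd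
    have hJ : 0 ≤ x0 ⬝ᵥ ((Matrix.of (fun _ _ => (1 : ℝ)) : Matrix V V ℝ) *ᵥ x0) := by
      have hmv : (Matrix.of (fun _ _ => (1 : ℝ)) : Matrix V V ℝ) *ᵥ x0 = fun _ => ∑ j, x0 j := by
        ext i
        simp [Matrix.mulVec, dotProduct]
      rw [hmv, dotProduct, ← Finset.sum_mul]
      exact mul_self_nonneg _
    have hupper : lam ≤ n := by
      have hq : x0 ⬝ᵥ (((n : ℝ) • (1 : Matrix V V ℝ) - G.lapMatrix ℝ) *ᵥ x0)
          = x0 ⬝ᵥ (Gᶜ.lapMatrix ℝ *ᵥ x0) + x0 ⬝ᵥ ((Matrix.of (fun _ _ => (1 : ℝ)) : Matrix V V ℝ) *ᵥ x0) := by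
        rw [hident, add_mulVec, dotProduct_add]
      rw [sub_mulVec, dotProduct_sub, smul_mulVec, one_mulVec, dotProduct_smul,
        smul_eq_mul, hx0eig, dotProduct_smul, smul_eq_mul] at hq
      nlinarith [hcomplpsd, hJ]
    have : lam ≤ (d : ℝ) + 1 := by rw [hcast]; exact hupper
    linarith
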